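/- Let T be a contraction on H with block form T = [[W, R],[0, W']] on H = G ⊕ G^⊥, where W and W' are partial isometries on G and G^⊥ respectively. If |T| ≤ |Re T|, then T is self-adjoint. -/

import Mathlib

open ContinuousLinearMap

/-- The modulus `|T| = (T*T)^{1/2}` of an operator. -/
noncomputable def absOp {H : Type*} [NormedAddCommGroup H] [InnerProductSpace ℂ H]
    [CompleteSpace H] (T : H →L[ℂ] H) : H →L[ℂ] H :=
  CFC.sqrt (adjoint T * T)

/-- The real part `Re T = (T + T*)/2` of an operator. -/
noncomputable def reOp {H : Type*} [NormedAddCommGroup H] [InnerProductSpace ℂ H]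
    [CompleteSpace H] (T : H →L[ℂ] H) : H →L[ℂ] H :=
  (2 : ℂ)⁻¹ • (T + adjoint T)

/-- `|Re T| = ((Re T)^2)^{1/2}`. -/
noncomputable def absRe {H : Type*} [NormedAddCommGroup H] [InnerProductSpace ℂ H]
    [CompleteSpace H] (T : H →L[ℂ] H) : H →L[ℂ] H :=
  CFC.sqrt (reOp T ^ 2)

open RCLike

set_option maxHeartbeats 2000000
set_option synthInstance.maxHeartbeats 200000

namespace Stmt16Aux


variable {H : Type*} [NormedAddCommGroup H] [InnerProductSpace ℂ H] [CompleteSpace H]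

local notation "⟪" x ", " y "⟫" => @inner ℂ _ _ x y

lemma pos_inner {S : H →L[ℂ] H} (hS : 0 ≤ S) (x : H) : 0 ≤ re ⟪S x, x⟫ :=
  ((nonneg_iff_isPositive S).mp hS).re_inner_nonneg_left x

lemma mul_apply' (S V : H →L[ℂ] H) (x : H) : (S * V) x = S (V x) := rfl

lemma isSelfAdjoint_adj_mul (V : H →L[ℂ] H) : IsSelfAdjoint (adjoint V * V) := by
  rw [IsSelfAdjoint, star_mul, star_eq_adjoint, star_eq_adjoint, adjoint_adjoint]

lemma inner_adj_mul_re (V : H →L[ℂ] H) (x : H) :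
    re ⟪(adjoint V * V) x, x⟫ = ‖V x‖ ^ 2 := by
  rw [mul_apply', adjoint_inner_left, inner_self_eq_norm_sq]

lemma sa_inner_apply {Q : H →L[ℂ] H} (hQ : IsSelfAdjoint Q) (x y : H) :
    ⟪Q x, y⟫ = ⟪x, Q y⟫ := by
  conv_lhs => rw [← hQ.adjoint_eq, adjoint_inner_left]

lemma pos_apply_eq_zero {S : H →L[ℂ] H} (hS : 0 ≤ S) {x : H}
    (hx : re ⟪S x, x⟫ = 0) : S x = 0 := by
  set Q := CFC.sqrt S with hQdef
  have hQ0 : 0 ≤ Q := CFC.sqrt_nonneg _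
  have hQsq : Q * Q = S := CFC.sqrt_mul_sqrt_self S hS
  have hQsa : IsSelfAdjoint Q := .of_nonneg hQ0
  have h1 : re ⟪S x, x⟫ = re ⟪Q x, Q x⟫ := by
    rw [← hQsq, mul_apply', sa_inner_apply hQsa]
  rw [inner_self_eq_norm_sq] at h1
  have h2 : Q x = 0 := by
    rw [hx] at h1
    have : ‖Q x‖ = 0 := by nlinarith [norm_nonneg (Q x)]
    simpa using this
  rw [← hQsq, mul_apply', h2, map_zero]

lemma le_inner_le {S B : H →L[ℂ] H} (h : S ≤ B) (x : H) :
    re ⟪S x, x⟫ ≤ re ⟪B x, x⟫ := by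
  have := pos_inner (sub_nonneg.mpr h) x
  rw [sub_apply, inner_sub_left, map_sub] at this
  linarith

lemma one_sub_nonneg {C : H →L[ℂ] H} (hsa : IsSelfAdjoint C) (hC : ‖C‖ ≤ 1) :
    0 ≤ 1 - C := by
  rw [nonneg_iff_isPositive]
  refine ⟨((IsSelfAdjoint.one (H →L[ℂ] H)).sub hsa).isSymmetric, fun x => ?_⟩
  have h1 : re ⟪C x, x⟫ ≤ ‖x‖ ^ 2 := by
    calc re ⟪C x, x⟫ ≤ ‖⟪C x, x⟫‖ := re_le_norm _
    _ ≤ ‖C x‖ * ‖x‖ := norm_inner_le_norm _ _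
    _ ≤ (‖C‖ * ‖x‖) * ‖x‖ := by
        have := C.le_opNorm x
        nlinarith [norm_nonneg x]
    _ ≤ ‖x‖ ^ 2 := by nlinarith [norm_nonneg x]
  have h2 : re ⟪(1 - C) x, x⟫ = ‖x‖ ^ 2 - re ⟪C x, x⟫ := by
    rw [sub_apply, inner_sub_left, map_sub, ContinuousLinearMap.one_apply, inner_self_eq_norm_sq]
  rw [reApplyInnerSelf_apply, h2]
  linarith

lemma norm_eq_of_sq_eq {a b : ℝ} (ha : 0 ≤ a) (hb : 0 ≤ b) (h : a ^ 2 = b ^ 2) :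
    a = b := by
  have h1 : |a| = |b| := by rw [← Real.sqrt_sq_eq_abs, ← Real.sqrt_sq_eq_abs, h]
  rwa [abs_of_nonneg ha, abs_of_nonneg hb] at h1

lemma contraction_fixed_iff {V : H →L[ℂ] H} (hV : ‖V‖ ≤ 1) (x : H) :
    (adjoint V * V) x = x ↔ ‖V x‖ = ‖x‖ := by
  constructor
  · intro hx
    have h1 : re ⟪(adjoint V * V) x, x⟫ = ‖x‖ ^ 2 := by
      rw [hx, inner_self_eq_norm_sq]
    rw [inner_adj_mul_re] at h1
    exact norm_eq_of_sq_eq (norm_nonneg _) (norm_nonneg _) h1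
  · intro hx
    have hnorm : ‖adjoint V * V‖ ≤ 1 := by
      calc ‖adjoint V * V‖ ≤ ‖adjoint V‖ * ‖V‖ := norm_mul_le _ _
      _ = ‖V‖ * ‖V‖ := by rw [LinearIsometryEquiv.norm_map]
      _ ≤ 1 := by nlinarith [norm_nonneg V]
    have hpos : 0 ≤ 1 - adjoint V * V := one_sub_nonneg (isSelfAdjoint_adj_mul V) hnorm
    have hz : re ⟪(1 - adjoint V * V) x, x⟫ = 0 := by
      rw [sub_apply, inner_sub_left, map_sub, ContinuousLinearMap.one_apply, inner_self_eq_norm_sq,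
        inner_adj_mul_re, hx]
      ring
    have := pos_apply_eq_zero hpos hz
    rw [sub_apply, ContinuousLinearMap.one_apply, sub_eq_zero] at this
    exact this.symm


lemma adj_mul_self_nonneg (V : H →L[ℂ] H) : 0 ≤ adjoint V * V := by
  rw [nonneg_iff_isPositive]
  refine ⟨(isSelfAdjoint_adj_mul V).isSymmetric, fun x => ?_⟩
  rw [reApplyInnerSelf_apply, inner_adj_mul_re]
  positivity

lemma norm_adjoint (V : H →L[ℂ] H) : ‖adjoint V‖ = ‖V‖ :=
  LinearIsometryEquiv.norm_map _ V

lemma reOp_isSelfAdjoint (T : H →L[ℂ] H) : IsSelfAdjoint (reOp T) := by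
  rw [IsSelfAdjoint, reOp, star_smul, star_add, star_eq_adjoint, star_eq_adjoint,
    adjoint_adjoint]
  rw [show star ((2:ℂ)⁻¹) = (2:ℂ)⁻¹ by simp]
  rw [add_comm]

lemma reOp_sq_nonneg (T : H →L[ℂ] H) : 0 ≤ reOp T ^ 2 := by
  rw [nonneg_iff_isPositive]
  constructor
  · apply IsSelfAdjoint.isSymmetric
    rw [IsSelfAdjoint, pow_two, star_mul, (reOp_isSelfAdjoint T).star_eq]
  · intro x
    rw [reApplyInnerSelf_apply, pow_two, mul_apply',
      sa_inner_apply (reOp_isSelfAdjoint T), inner_self_eq_norm_sq]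
    positivity

lemma reOp_norm_le (T : H →L[ℂ] H) (hT : ‖T‖ ≤ 1) : ‖reOp T‖ ≤ 1 := by
  rw [reOp]
  calc ‖(2:ℂ)⁻¹ • (T + adjoint T)‖ = ‖(2:ℂ)⁻¹‖ * ‖T + adjoint T‖ := norm_smul _ _
  _ ≤ 2⁻¹ * (‖T‖ + ‖adjoint T‖) := by
      have h1 : ‖(2:ℂ)⁻¹‖ = 2⁻¹ := by simp
      have h2 := norm_add_le T (adjoint T)
      rw [h1]
      have : (0:ℝ) ≤ 2⁻¹ := by norm_num
      nlinarith
  _ ≤ 1 := by rw [norm_adjoint]; linarith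

lemma sqrt_norm_le {S : H →L[ℂ] H} (hS0 : 0 ≤ S) (hS : ‖S‖ ≤ 1) :
    ‖CFC.sqrt S‖ ≤ 1 := by
  have hsa : IsSelfAdjoint (CFC.sqrt S) := .of_nonneg (CFC.sqrt_nonneg _)
  have h1 : ‖CFC.sqrt S‖ * ‖CFC.sqrt S‖ = ‖CFC.sqrt S * CFC.sqrt S‖ := by
    rw [← CStarRing.norm_star_mul_self, hsa.star_eq]
  rw [CFC.sqrt_mul_sqrt_self S hS0] at h1
  nlinarith [norm_nonneg (CFC.sqrt S)]

lemma self_sub_sq_nonneg {C : H →L[ℂ] H} (hC0 : 0 ≤ C) (hC : ‖C‖ ≤ 1) :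
    0 ≤ C - C * C := by
  set R' := CFC.sqrt C with hR'def
  have hR'0 : 0 ≤ R' := CFC.sqrt_nonneg _
  have hR'sq : R' * R' = C := CFC.sqrt_mul_sqrt_self C hC0
  have hR'sa : IsSelfAdjoint R' := .of_nonneg hR'0
  have hkey : R' * (1 - C) * R' = C - C * C := by
    have e1 : R' * C * R' = C * C := by
      rw [← hR'sq]; noncomm_ring
    rw [mul_sub, sub_mul, mul_one, hR'sq, e1]
  have h1C : 0 ≤ (1:H →L[ℂ] H) - C :=
    one_sub_nonneg ((nonneg_iff_isPositive C).mp hC0).isSelfAdjoint hC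
  have hpos := ((nonneg_iff_isPositive _).mp h1C).adjoint_conj R'
  rw [hR'sa.adjoint_eq] at hpos
  rw [nonneg_iff_isPositive, ← hkey]
  have hcm : R' ∘L (1 - C) ∘L R' = R' * (1 - C) * R' := by
    ext x; rfl
  rwa [hcm] at hpos

lemma reOp_two_smul (T : H →L[ℂ] H) (x : H) :
    (2:ℂ) • reOp T x = T x + adjoint T x := by
  rw [reOp, smul_apply, add_apply, smul_smul]
  norm_num

lemma reOp_sq_apply (T : H →L[ℂ] H) (x : H) :
    reOp T (reOp T x) = (4:ℂ)⁻¹ • (T (T x) + T (adjoint T x) +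
      (adjoint T (T x) + adjoint T (adjoint T x))) := by
  simp only [reOp, smul_apply, add_apply, map_smul, map_add, smul_smul, smul_add]
  module

lemma sqrt_commutes {S P : H →L[ℂ] H} (hS0 : 0 ≤ S) (hPsa : IsSelfAdjoint P)
    (hPidem : P * P = P) (hc : S * P = P * S) :
    CFC.sqrt S * P = P * CFC.sqrt S := by
  set Q := CFC.sqrt S with hQdef
  have hQ0 : 0 ≤ Q := CFC.sqrt_nonneg _
  have hQsq : Q * Q = S := CFC.sqrt_mul_sqrt_self S hS0
  set u : H →L[ℂ] H := 1 - P - P with hu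
  have husa : IsSelfAdjoint u := by
    rw [IsSelfAdjoint, hu, star_sub, star_sub, star_one, hPsa.star_eq]
  have hu2 : u * u = 1 := by
    simp only [hu, sub_mul, mul_sub, one_mul, mul_one, hPidem]
    abel
  have hcu : S * u = u * S := by
    simp only [hu, mul_sub, sub_mul, mul_one, one_mul, hc]
  have hupos : 0 ≤ u * (Q * u) := by
    have h1 := ((nonneg_iff_isPositive Q).mp hQ0).adjoint_conj u
    rw [husa.adjoint_eq] at h1
    rw [nonneg_iff_isPositive]
    have hcm : u ∘L Q ∘L u = u * (Q * u) := by ext x; rfl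
    rwa [hcm] at h1
  have hsq : (u * (Q * u)) * (u * (Q * u)) = S := by
    have e : (u * (Q * u)) * (u * (Q * u)) = u * (Q * ((u * u) * (Q * u))) := by
      simp only [mul_assoc]
    rw [e, hu2, one_mul, ← mul_assoc Q Q u, hQsq, ← mul_assoc u S u, ← hcu,
      mul_assoc S u u, hu2, mul_one]
  have huQu : Q = u * (Q * u) := by
    rw [hQdef]; exact CFC.sqrt_unique hsq hupos
  have hQu : Q * u = u * Q := by
    conv_lhs => rw [huQu]
    rw [mul_assoc u (Q * u) u, mul_assoc Q u u, hu2, mul_one]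
  have hexp : Q - Q * P - Q * P = Q - P * Q - P * Q := by
    have := hQu
    simp only [hu, mul_sub, sub_mul, mul_one, one_mul] at this
    exact this
  have hsum : Q * P + Q * P = P * Q + P * Q := by
    rw [sub_sub, sub_sub, sub_right_inj] at hexp
    exact hexp
  rw [← two_smul ℂ (Q * P), ← two_smul ℂ (P * Q)] at hsum
  exact smul_right_injective _ (two_ne_zero) hsum

lemma fixed_analysis {T : H →L[ℂ] H} (hT : ‖T‖ ≤ 1) (h : absOp T ≤ absRe T)
    {x : H} (hx : (adjoint T * T) x = x) :
    T (T x) = x ∧ (adjoint T * T) (T x) = T x ∧ adjoint T x = T x := by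
  have hTx_norm : ‖T x‖ = ‖x‖ := (contraction_fixed_iff hT x).mp hx
  set S := adjoint T * T with hSdef
  set Q := absOp T with hQdef
  set B := absRe T with hBdef
  set A := reOp T with hAdef
  have hS0 : 0 ≤ S := adj_mul_self_nonneg T
  have hSnorm : ‖S‖ ≤ 1 := by
    calc ‖S‖ ≤ ‖adjoint T‖ * ‖T‖ := norm_mul_le _ _
    _ ≤ 1 := by rw [norm_adjoint]; nlinarith [norm_nonneg T]
  have hQ0 : 0 ≤ Q := CFC.sqrt_nonneg _
  have hQsq : Q * Q = S := CFC.sqrt_mul_sqrt_self S hS0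
  have hQnorm : ‖Q‖ ≤ 1 := sqrt_norm_le hS0 hSnorm
  have hB0 : 0 ≤ B := CFC.sqrt_nonneg _
  have hBsq : B * B = A * A := by
    have := CFC.sqrt_mul_sqrt_self (A ^ 2) (reOp_sq_nonneg T)
    rw [pow_two] at this
    exact this
  have hBsa : IsSelfAdjoint B := .of_nonneg hB0
  have hAsa : IsSelfAdjoint A := reOp_isSelfAdjoint T
  have hAnorm : ‖A‖ ≤ 1 := reOp_norm_le T hT
  have hBnorm : ‖B‖ ≤ 1 := by
    apply sqrt_norm_le (reOp_sq_nonneg T)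
    rw [pow_two]
    calc ‖A * A‖ ≤ ‖A‖ * ‖A‖ := norm_mul_le _ _
    _ ≤ 1 := by nlinarith [norm_nonneg A]
  -- step i : ‖x‖^2 ≤ re ⟪Q x, x⟫
  have hstep1 : ‖x‖ ^ 2 ≤ re ⟪Q x, x⟫ := by
    have h1 : S ≤ Q := by
      have := self_sub_sq_nonneg hQ0 hQnorm
      rw [hQsq] at this
      exact sub_nonneg.mp this
    have h2 := le_inner_le h1 x
    rw [hx, inner_self_eq_norm_sq] at h2
    exact h2
  have hstep2 : re ⟪Q x, x⟫ ≤ re ⟪B x, x⟫ := le_inner_le h x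
  -- B x = x
  have hBx : B x = x := by
    have h1B : 0 ≤ 1 - B := one_sub_nonneg hBsa hBnorm
    have hz : re ⟪(1 - B) x, x⟫ = 0 := by
      have hle := pos_inner h1B x
      have : re ⟪(1 - B) x, x⟫ = ‖x‖ ^ 2 - re ⟪B x, x⟫ := by
        rw [sub_apply, inner_sub_left, map_sub, ContinuousLinearMap.one_apply, inner_self_eq_norm_sq]
      rw [this] at hle ⊢
      linarith
    have := pos_apply_eq_zero h1B hz
    rw [sub_apply, ContinuousLinearMap.one_apply, sub_eq_zero] at this
    exact this.symm
  have hA2x : A (A x) = x := by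
    have : (B * B) x = x := by rw [mul_apply', hBx, hBx]
    rw [hBsq, mul_apply'] at this
    exact this
  have hAx_norm : ‖A x‖ = ‖x‖ := by
    apply norm_eq_of_sq_eq (norm_nonneg _) (norm_nonneg _)
    have h1 : re ⟪A (A x), x⟫ = ‖x‖ ^ 2 := by rw [hA2x, inner_self_eq_norm_sq]
    rw [sa_inner_apply hAsa, inner_self_eq_norm_sq] at h1
    exact h1
  have hT'norm : ‖adjoint T‖ ≤ 1 := by rw [norm_adjoint]; exact hT
  have hT'x_norm : ‖adjoint T x‖ = ‖x‖ := by
    have hsum : T x + adjoint T x = (2:ℂ) • A x := (reOp_two_smul T x).symm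
    have h1 : ‖T x + adjoint T x‖ = 2 * ‖x‖ := by
      rw [hsum, norm_smul, hAx_norm]
      norm_num
    have h2 : ‖adjoint T x‖ ≤ ‖x‖ := by
      calc ‖adjoint T x‖ ≤ ‖adjoint T‖ * ‖x‖ := le_opNorm _ _
      _ ≤ ‖x‖ := by nlinarith [norm_nonneg x]
    have h3 : ‖T x + adjoint T x‖ ≤ ‖T x‖ + ‖adjoint T x‖ := norm_add_le _ _
    rw [hTx_norm, h1] at h3
    linarith
  have hTT'x : T (adjoint T x) = x := by
    have h1 := (contraction_fixed_iff hT'norm x).mpr hT'x_norm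
    rw [adjoint_adjoint] at h1
    rw [← mul_apply']
    exact h1
  have hT'Tx : adjoint T (T x) = x := by rw [← mul_apply']; exact hx
  have hsum2 : T (T x) + adjoint T (adjoint T x) = (2:ℂ) • x := by
    have e := reOp_sq_apply T x
    rw [hA2x, hTT'x, hT'Tx] at e
    have e4 := congrArg (fun y => (4:ℂ) • y) e
    simp only [smul_smul] at e4
    rw [show (4:ℂ) * 4⁻¹ = 1 by norm_num, one_smul] at e4
    calc T (T x) + adjoint T (adjoint T x)
        = (T (T x) + x + (x + adjoint T (adjoint T x))) - (x + x) := by abel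
    _ = (4:ℂ) • x - (x + x) := by rw [← e4]
    _ = (2:ℂ) • x := by module
  have hu_le : ‖T (T x)‖ ≤ ‖x‖ := by
    calc ‖T (T x)‖ ≤ ‖T‖ * ‖T x‖ := le_opNorm _ _
    _ ≤ 1 * ‖x‖ := by
        rw [hTx_norm]
        exact mul_le_mul_of_nonneg_right hT (norm_nonneg x)
    _ = ‖x‖ := one_mul _
  have hv_le : ‖adjoint T (adjoint T x)‖ ≤ ‖x‖ := by
    calc ‖adjoint T (adjoint T x)‖ ≤ ‖adjoint T‖ * ‖adjoint T x‖ := le_opNorm _ _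
    _ ≤ 1 * ‖x‖ := by
        rw [hT'x_norm]
        exact mul_le_mul_of_nonneg_right hT'norm (norm_nonneg x)
    _ = ‖x‖ := one_mul _
  have huv : ‖T (T x) + adjoint T (adjoint T x)‖ = 2 * ‖x‖ := by
    rw [hsum2, norm_smul]
    norm_num
  have hpar := parallelogram_law_with_norm ℂ (T (T x)) (adjoint T (adjoint T x))
  have hdiff : ‖T (T x) - adjoint T (adjoint T x)‖ = 0 := by
    have h0 : ‖T (T x) - adjoint T (adjoint T x)‖ *
        ‖T (T x) - adjoint T (adjoint T x)‖ ≤ 0 := by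
      nlinarith [hpar, hu_le, hv_le, huv, norm_nonneg (T (T x)),
        norm_nonneg (adjoint T (adjoint T x)), norm_nonneg x]
    nlinarith [norm_nonneg (T (T x) - adjoint T (adjoint T x))]
  have heqv : T (T x) = adjoint T (adjoint T x) := by
    rwa [norm_eq_zero, sub_eq_zero] at hdiff
  have hu_eq : T (T x) = x := by
    rw [← heqv, ← two_smul ℂ] at hsum2
    exact smul_right_injective _ two_ne_zero hsum2
  have hTxM : (adjoint T * T) (T x) = T x := by
    apply (contraction_fixed_iff hT (T x)).mpr
    rw [hu_eq, hTx_norm]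
  refine ⟨hu_eq, hTxM, ?_⟩
  calc adjoint T x = adjoint T (T (T x)) := by rw [hu_eq]
  _ = (adjoint T * T) (T x) := (mul_apply' _ _ _).symm
  _ = T x := hTxM


end Stmt16Aux

open Stmt16Aux

local notation "⟪" x ", " y "⟫" => @inner ℂ _ _ x y

/-- A contraction with block form  `[[W, R],[0, W']]` where `W`, `W'` are partial isometries,
satisfying `|T| ≤ |Re T|`, is self-adjoint. -/
theorem stmt16 {H : Type*} [NormedAddCommGroup H] [InnerProductSpace ℂ H] [CompleteSpace H]
    (T : H →L[ℂ] H) (hT : ‖T‖ ≤ 1) (G : Submodule ℂ H) [CompleteSpace G]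
    (W : G →L[ℂ] G) (hW : ∀ x : G, (W x : H) = T x)
    (hPIW : IsIdempotentElem (adjoint W * W))
    (W' : (Gᗮ : Submodule ℂ H) →L[ℂ] (Gᗮ : Submodule ℂ H))
    (hW' : ∀ x : (Gᗮ : Submodule ℂ H), T x - W' x ∈ G)
    (hPIW' : IsIdempotentElem (adjoint W' * W'))
    (h : absOp T ≤ absRe T) :
    adjoint T = T := by
  set S := adjoint T * T with hSdef
  have hS0 : 0 ≤ S := adj_mul_self_nonneg T
  have hSsa : IsSelfAdjoint S := isSelfAdjoint_adj_mul T
  have hT'norm : ‖adjoint T‖ ≤ 1 := by rw [norm_adjoint]; exact hT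
  -- M is the subspace where T acts isometrically
  set M : Submodule ℂ H := LinearMap.ker ((1 - S : H →L[ℂ] H) : H →ₗ[ℂ] H) with hMdef
  have hMx : ∀ x : H, x ∈ M ↔ S x = x := by
    intro x
    rw [hMdef, LinearMap.mem_ker]
    constructor
    · intro h1
      have : (1 - S) x = 0 := h1
      rw [sub_apply, ContinuousLinearMap.one_apply, sub_eq_zero] at this
      exact this.symm
    · intro h1
      show (1 - S) x = 0
      rw [sub_apply, ContinuousLinearMap.one_apply, h1, sub_self]
  -- key consequences on M
  have hMT : ∀ x : H, S x = x → S (T x) = T x := fun x hx => (fixed_analysis hT h hx).2.1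
  have hMadj : ∀ x : H, S x = x → adjoint T x = T x := fun x hx => (fixed_analysis hT h hx).2.2
  have hMT2 : ∀ x : H, S x = x → T (T x) = x := fun x hx => (fixed_analysis hT h hx).1
  -- partial isometry structure for W
  have hEidem : (adjoint W * W) * (adjoint W * W) = adjoint W * W := hPIW
  have hEsa : IsSelfAdjoint (adjoint W * W) := isSelfAdjoint_adj_mul W
  have hEapply : ∀ g : G, (adjoint W * W) ((adjoint W * W) g) = (adjoint W * W) g := by
    intro g
    exact congrArg (fun f => f g) hEidem
  have hWkill : ∀ g : G, W g = W ((adjoint W * W) g) := by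
    intro g
    have hz : (adjoint W * W) (g - (adjoint W * W) g) = 0 := by
      rw [map_sub, hEapply, sub_self]
    have h1 := inner_adj_mul_re W (g - (adjoint W * W) g)
    rw [hz, inner_zero_left, map_zero] at h1
    have h2 : W (g - (adjoint W * W) g) = 0 := by
      rw [← norm_eq_zero]
      nlinarith [norm_nonneg (W (g - (adjoint W * W) g))]
    rw [map_sub, sub_eq_zero] at h2
    exact h2
  have hEnorm : ∀ g : G, ‖W ((adjoint W * W) g)‖ = ‖(adjoint W * W) g‖ := by
    intro g
    apply norm_eq_of_sq_eq (norm_nonneg _) (norm_nonneg _)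
    have h1 := inner_adj_mul_re W ((adjoint W * W) g)
    rw [hEapply, inner_self_eq_norm_sq] at h1
    exact h1.symm
  -- elements of ran E, mapped to H, are in M
  have hEM : ∀ g : G, S (((adjoint W * W) g : G) : H) = (((adjoint W * W) g : G) : H) := by
    intro g
    apply (contraction_fixed_iff hT _).mpr
    rw [← hW]
    calc ‖(W ((adjoint W * W) g) : H)‖ = ‖W ((adjoint W * W) g)‖ := rfl
    _ = ‖(adjoint W * W) g‖ := hEnorm g
    _ = ‖(((adjoint W * W) g : G) : H)‖ := rfl
  -- W' partial isometry structure
  have hE'idem : (adjoint W' * W') * (adjoint W' * W') = adjoint W' * W' := hPIW'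
  have hE'sa : IsSelfAdjoint (adjoint W' * W') := isSelfAdjoint_adj_mul W'
  have hE'apply : ∀ g : (Gᗮ : Submodule ℂ H),
      (adjoint W' * W') ((adjoint W' * W') g) = (adjoint W' * W') g := by
    intro g
    exact congrArg (fun f => f g) hE'idem
  have hW'kill : ∀ g : (Gᗮ : Submodule ℂ H), W' g = W' ((adjoint W' * W') g) := by
    intro g
    have hz : (adjoint W' * W') (g - (adjoint W' * W') g) = 0 := by
      rw [map_sub, hE'apply, sub_self]
    have h1 := inner_adj_mul_re W' (g - (adjoint W' * W') g)
    rw [hz, inner_zero_left, map_zero] at h1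
    have h2 : W' (g - (adjoint W' * W') g) = 0 := by
      rw [← norm_eq_zero]
      nlinarith [norm_nonneg (W' (g - (adjoint W' * W') g))]
    rw [map_sub, sub_eq_zero] at h2
    exact h2
  have hE'norm : ∀ g : (Gᗮ : Submodule ℂ H),
      ‖W' ((adjoint W' * W') g)‖ = ‖(adjoint W' * W') g‖ := by
    intro g
    apply norm_eq_of_sq_eq (norm_nonneg _) (norm_nonneg _)
    have h1 := inner_adj_mul_re W' ((adjoint W' * W') g)
    rw [hE'apply, inner_self_eq_norm_sq] at h1
    exact h1.symm
  have hE'M : ∀ g : (Gᗮ : Submodule ℂ H),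
      S (((adjoint W' * W') g : (Gᗮ : Submodule ℂ H)) : H)
        = (((adjoint W' * W') g : (Gᗮ : Submodule ℂ H)) : H) := by
    intro g
    set c := (adjoint W' * W') g with hcdef
    have hr : T ↑c - ↑(W' c) ∈ G := hW' c
    have hdec : T ↑c = ↑(W' c) + (T ↑c - ↑(W' c)) := by abel
    have horth : ⟪(↑(W' c) : H), T ↑c - ↑(W' c)⟫ = 0 :=
      (Submodule.mem_orthogonal' G (↑(W' c))).mp (SetLike.coe_mem (W' c)) _ hr
    have hnormsq : ‖T ↑c‖ ^ 2 = ‖(↑(W' c) : H)‖ ^ 2 + ‖T ↑c - ↑(W' c)‖ ^ 2 := by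
      rw [hdec]
      rw [norm_add_sq (𝕜 := ℂ), horth]
      simp
    have hcc : ‖(↑c : H)‖ = ‖c‖ := rfl
    have hWcc : ‖(↑(W' c) : H)‖ = ‖W' c‖ := rfl
    have hWc : ‖(↑(W' c) : H)‖ = ‖(↑c : H)‖ := by
      rw [hWcc, hcc, hcdef]; exact hE'norm g
    have hTc : ‖T ↑c‖ ≤ ‖(↑c : H)‖ := by
      calc ‖T (↑c : H)‖ ≤ ‖T‖ * ‖(↑c : H)‖ := le_opNorm _ _
      _ ≤ 1 * ‖(↑c : H)‖ := mul_le_mul_of_nonneg_right hT (norm_nonneg _)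
      _ = ‖(↑c : H)‖ := one_mul _
    have hrzero : T ↑c - ↑(W' c) = 0 := by
      rw [← norm_eq_zero]
      nlinarith [norm_nonneg (T ↑c - ↑(W' c)), hnormsq, hWc, hTc,
        norm_nonneg (↑c : H), norm_nonneg (T (↑c : H))]
    apply (contraction_fixed_iff hT _).mpr
    have hTeq : T ↑c = ↑(W' c) := by rwa [sub_eq_zero] at hrzero
    rw [hTeq, hWc]
  -- orthogonality helpers
  have hM_closed : IsClosed (M : Set H) := by
    rw [hMdef]
    exact ContinuousLinearMap.isClosed_ker (1 - S)
  haveI : CompleteSpace M := hM_closed.completeSpace_coe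
  have hMperp : ∀ {x : H}, x ∈ Mᗮ → ∀ {y : H}, S y = y → ⟪x, y⟫ = 0 := by
    intro x hx y hy
    rw [inner_eq_zero_symm]
    exact (Submodule.mem_orthogonal M x).mp hx y ((hMx y).mpr hy)
  have hprojW : ∀ x ∈ Mᗮ, ∀ a : G, x - ↑a ∈ Gᗮ → W a = 0 := by
    intro x hx a ha
    have key : ∀ g : G, ⟪((adjoint W * W) a : G), g⟫ = 0 := by
      intro g
      rw [sa_inner_apply hEsa, Submodule.coe_inner]
      have e1 : ⟪x, (((adjoint W * W) g : G) : H)⟫ = 0 := hMperp hx (hEM g)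
      have e2 : ⟪x - ↑a, (((adjoint W * W) g : G) : H)⟫ = 0 :=
        (Submodule.mem_orthogonal' G _).mp ha _ (SetLike.coe_mem _)
      have e3 : (↑a : H) = x - (x - ↑a) := by abel
      rw [e3, inner_sub_left, e1, e2, sub_zero]
    have hEa : (adjoint W * W) a = 0 := by
      have := key ((adjoint W * W) a)
      rwa [inner_self_eq_zero] at this
    rw [hWkill a, hEa, map_zero]
  have hprojW' : ∀ x ∈ Mᗮ, ∀ b : (Gᗮ : Submodule ℂ H), x - ↑b ∈ Gᗮᗮ → W' b = 0 := by
    intro x hx b hb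
    have key : ∀ g : (Gᗮ : Submodule ℂ H), ⟪((adjoint W' * W') b : (Gᗮ : Submodule ℂ H)), g⟫ = 0 := by
      intro g
      rw [sa_inner_apply hE'sa, Submodule.coe_inner]
      have e1 : ⟪x, (((adjoint W' * W') g : (Gᗮ : Submodule ℂ H)) : H)⟫ = 0 := hMperp hx (hE'M g)
      have e2 : ⟪x - ↑b, (((adjoint W' * W') g : (Gᗮ : Submodule ℂ H)) : H)⟫ = 0 :=
        (Submodule.mem_orthogonal' Gᗮ _).mp hb _ (SetLike.coe_mem _)
      have e3 : (↑b : H) = x - (x - ↑b) := by abel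
      rw [e3, inner_sub_left, e1, e2, sub_zero]
    have hEb : (adjoint W' * W') b = 0 := by
      have := key ((adjoint W' * W') b)
      rwa [inner_self_eq_zero] at this
    rw [hW'kill b, hEb, map_zero]
  have hTNG : ∀ x ∈ Mᗮ, T x ∈ G := by
    intro x hx
    set a : G := G.orthogonalProjection x with hadef
    have ha : x - ↑a ∈ Gᗮ := Submodule.sub_starProjection_mem_orthogonal (K := G) x
    set b : (Gᗮ : Submodule ℂ H) := ⟨x - ↑a, ha⟩ with hbdef
    have hb : x - ↑b ∈ Gᗮᗮ := by
      have : x - (↑b : H) = ↑a := by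
        show x - (x - ↑a) = ↑a
        abel
      rw [this]
      exact Submodule.le_orthogonal_orthogonal G (SetLike.coe_mem a)
    have hWa : W a = 0 := hprojW x hx a ha
    have hW'b : W' b = 0 := hprojW' x hx b hb
    have hxab : (↑a : H) + ↑b = x := by
      show (↑a : H) + (x - ↑a) = x
      abel
    have hTa : T ↑a = 0 := by rw [← hW a, hWa, Submodule.coe_zero]
    have hTb : T (↑b : H) ∈ G := by
      have := hW' b
      rwa [hW'b, Submodule.coe_zero, sub_zero] at this
    have : T x = T ↑b := by rw [← hxab, map_add, hTa, zero_add]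
    rw [this]
    exact hTb
  have hNinvT : ∀ x ∈ Mᗮ, T x ∈ Mᗮ := by
    intro x hx
    rw [Submodule.mem_orthogonal]
    intro u hu
    have hSu : S u = u := (hMx u).mp hu
    rw [← adjoint_inner_left, hMadj u hSu]
    exact (Submodule.mem_orthogonal M x).mp hx (T u) ((hMx _).mpr (hMT u hSu))
  have hNinvT' : ∀ x ∈ Mᗮ, adjoint T x ∈ Mᗮ := by
    intro x hx
    rw [Submodule.mem_orthogonal]
    intro u hu
    have hSu : S u = u := (hMx u).mp hu
    rw [adjoint_inner_right]
    exact (Submodule.mem_orthogonal M x).mp hx (T u) ((hMx _).mpr (hMT u hSu))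
  have hNG0 : ∀ x ∈ Mᗮ, x ∈ G → T x = 0 := by
    intro x hx hxG
    set a : G := ⟨x, hxG⟩ with hadef
    have ha : x - ↑a ∈ Gᗮ := by
      have : x - (↑a : H) = 0 := by
        show x - x = 0
        abel
      rw [this]
      exact zero_mem _
    have hWa : W a = 0 := hprojW x hx a ha
    have : T x = T ↑a := rfl
    rw [this, ← hW a, hWa, Submodule.coe_zero]
  have hTN2 : ∀ x ∈ Mᗮ, T (T x) = 0 := fun x hx => hNG0 (T x) (hNinvT x hx) (hTNG x hx)
  have hT'G : ∀ x ∈ Mᗮ, adjoint T x ∈ Gᗮ := by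
    intro x hx
    rw [Submodule.mem_orthogonal]
    intro u hu
    rw [adjoint_inner_right]
    set g : G := ⟨u, hu⟩ with hgdef
    have h1 : T u = T (((adjoint W * W) g : G) : H) := by
      calc T u = T (↑g : H) := rfl
      _ = ↑(W g) := (hW g).symm
      _ = ↑(W ((adjoint W * W) g)) := by rw [← hWkill]
      _ = T (((adjoint W * W) g : G) : H) := hW _
    rw [h1]
    exact (Submodule.mem_orthogonal M x).mp hx _ ((hMx _).mpr (hMT _ (hEM g)))
  have hG'T'0 : ∀ y ∈ Mᗮ, y ∈ Gᗮ → adjoint T y = 0 := by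
    intro y hy hyG
    have hz : ∀ z : H, ⟪T z, y⟫ = 0 := by
      intro z
      set m : H := ↑(M.orthogonalProjection z) with hmdef
      have hm : S m = m := (hMx m).mp (SetLike.coe_mem _)
      have hn : z - m ∈ Mᗮ := Submodule.sub_starProjection_mem_orthogonal (K := M) z
      have hdec : T z = T m + T (z - m) := by rw [← map_add]; congr 1; abel
      rw [hdec, inner_add_left]
      have e1 : ⟪T m, y⟫ = 0 :=
        (Submodule.mem_orthogonal M y).mp hy (T m) ((hMx _).mpr (hMT m hm))
      have e2 : ⟪T (z - m), y⟫ = 0 :=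
        (Submodule.mem_orthogonal G y).mp hyG _ (hTNG _ hn)
      rw [e1, e2, add_zero]
    have : ⟪adjoint T y, adjoint T y⟫ = 0 := by
      rw [adjoint_inner_left, inner_eq_zero_symm]
      exact hz _
    rwa [inner_self_eq_zero] at this
  have hT'T' : ∀ x ∈ Mᗮ, adjoint T (adjoint T x) = 0 :=
    fun x hx => hG'T'0 _ (hNinvT' x hx) (hT'G x hx)
  -- the subspace U = Mᗮ ⊓ ker T†
  set U : Submodule ℂ H := Mᗮ ⊓ LinearMap.ker ((adjoint T : H →L[ℂ] H) : H →ₗ[ℂ] H) with hUdef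
  have hU_mem : ∀ {u : H}, u ∈ U → u ∈ Mᗮ ∧ adjoint T u = 0 := by
    intro u hu
    rw [hUdef, Submodule.mem_inf] at hu
    exact ⟨hu.1, hu.2⟩
  have hU_mem' : ∀ {u : H}, u ∈ Mᗮ → adjoint T u = 0 → u ∈ U := by
    intro u h1 h2
    rw [hUdef, Submodule.mem_inf]
    exact ⟨h1, h2⟩
  have hU_closed : IsClosed (U : Set H) := by
    rw [hUdef, Submodule.coe_inf]
    exact (Submodule.isClosed_orthogonal M).inter (ContinuousLinearMap.isClosed_ker (adjoint T))
  haveI : CompleteSpace U := hU_closed.completeSpace_coe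
  set P : H →L[ℂ] H := U.subtypeL ∘L U.orthogonalProjection with hPdef
  have hPsa : IsSelfAdjoint P := isSelfAdjoint_starProjection U
  have hPmem : ∀ x : H, P x ∈ U := fun x => SetLike.coe_mem _
  have hPid : ∀ u : H, u ∈ U → P u = u := by
    intro u hu
    show U.starProjection u = u
    rw [Submodule.starProjection_eq_self_iff]
    exact hu
  have hPidem : P * P = P := by
    ext x
    show P (P x) = P x
    exact hPid _ (hPmem x)
  have hSU : ∀ u ∈ U, S u ∈ U := by
    intro u hu
    obtain ⟨huN, _⟩ := hU_mem hu
    have hTu : T u ∈ Mᗮ := hNinvT u huN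
    have h1 : S u = adjoint T (T u) := rfl
    apply hU_mem'
    · rw [h1]; exact hNinvT' _ hTu
    · rw [h1]; exact hT'T' _ hTu
  have hA2U : ∀ u ∈ U, reOp T (reOp T u) = (4:ℂ)⁻¹ • S u := by
    intro u hu
    obtain ⟨huN, huK⟩ := hU_mem hu
    rw [reOp_sq_apply, huK, hTN2 u huN]
    have h1 : adjoint T (T u) = S u := rfl
    rw [h1]
    simp
  have hcomm : ∀ C : H →L[ℂ] H, IsSelfAdjoint C → (∀ x : H, C (P x) ∈ U) →
      C * P = P * C := by
    intro C hCsa hCP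
    have h1 : P * (C * P) = C * P := by
      ext x
      show P (C (P x)) = C (P x)
      exact hPid _ (hCP x)
    have h2 := congrArg star h1
    simp only [star_mul, hPsa.star_eq, hCsa.star_eq] at h2
    calc C * P = P * (C * P) := h1.symm
    _ = P * C * P := by rw [← mul_assoc]
    _ = P * C := h2
  have hcommS : S * P = P * S := hcomm S hSsa (fun x => hSU _ (hPmem x))
  have hA2sa : IsSelfAdjoint (reOp T * reOp T) := by
    rw [IsSelfAdjoint, star_mul, (reOp_isSelfAdjoint T).star_eq]
  have hcommA2 : (reOp T * reOp T) * P = P * (reOp T * reOp T) := by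
    apply hcomm _ hA2sa
    intro x
    have h1 : (reOp T * reOp T) (P x) = (4:ℂ)⁻¹ • S (P x) := hA2U _ (hPmem x)
    rw [h1]
    exact Submodule.smul_mem _ _ (hSU _ (hPmem x))
  have hQP : absOp T * P = P * absOp T := sqrt_commutes hS0 hPsa hPidem hcommS
  have hBP : absRe T * P = P * absRe T := by
    apply sqrt_commutes (reOp_sq_nonneg T) hPsa hPidem
    rw [pow_two]
    exact hcommA2
  have hQ0 : 0 ≤ absOp T := CFC.sqrt_nonneg _
  have hB0 : 0 ≤ absRe T := CFC.sqrt_nonneg _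
  have hQsq : absOp T * absOp T = S := CFC.sqrt_mul_sqrt_self _ hS0
  have hBsq : absRe T * absRe T = reOp T * reOp T := by
    have h1 := CFC.sqrt_mul_sqrt_self _ (reOp_sq_nonneg T)
    rw [pow_two] at h1
    exact h1
  have hconj : ∀ C : H →L[ℂ] H, 0 ≤ C → C * P = P * C → 0 ≤ C * P := by
    intro C hC0 hCP
    have h1 : P ∘L C ∘L P = C * P := by
      calc P ∘L C ∘L P = P * (C * P) := rfl
      _ = (P * C) * P := by rw [mul_assoc]
      _ = (C * P) * P := by rw [hCP]
      _ = C * (P * P) := by rw [mul_assoc]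
      _ = C * P := by rw [hPidem]
    have h2 := ((nonneg_iff_isPositive C).mp hC0).conj_adjoint P
    rw [hPsa.adjoint_eq, h1] at h2
    exact (nonneg_iff_isPositive _).mpr h2
  have hQP0 : 0 ≤ absOp T * P := hconj _ hQ0 hQP
  have hBP0 : 0 ≤ absRe T * P := hconj _ hB0 hBP
  have sqcalc : ∀ C : H →L[ℂ] H, C * P = P * C →
      (C * P) * (C * P) = (C * C) * P := by
    intro C hCP
    calc (C * P) * (C * P) = C * ((P * C) * P) := by simp only [mul_assoc]
    _ = C * ((C * P) * P) := by rw [← hCP]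
    _ = C * (C * (P * P)) := by simp only [mul_assoc]
    _ = C * (C * P) := by rw [hPidem]
    _ = (C * C) * P := by rw [mul_assoc]
  have hQPsq : (absOp T * P) * (absOp T * P) = S * P := by
    rw [sqcalc _ hQP, hQsq]
  have hsqrtSP : CFC.sqrt (S * P) = absOp T * P := CFC.sqrt_unique hQPsq hQP0
  have hA2P : (reOp T * reOp T) * P = (4:ℂ)⁻¹ • (S * P) := by
    ext x
    rw [smul_apply]
    exact hA2U _ (hPmem x)
  have hX0 : 0 ≤ absRe T * P + absRe T * P := add_nonneg hBP0 hBP0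
  have hXsq : (absRe T * P + absRe T * P) * (absRe T * P + absRe T * P) = S * P := by
    have hBPBP : (absRe T * P) * (absRe T * P) = (4:ℂ)⁻¹ • (S * P) := by
      rw [sqcalc _ hBP, hBsq, hA2P]
    simp only [add_mul, mul_add, hBPBP]
    module
  have hXeq : absRe T * P + absRe T * P = absOp T * P := by
    rw [← hsqrtSP]
    exact (CFC.sqrt_unique hXsq hX0).symm
  have hkill : ∀ u ∈ U, T u = 0 := by
    intro u hu
    have hPu : P u = u := hPid u hu
    have e : (absRe T * P + absRe T * P) u = (absOp T * P) u := by rw [hXeq]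
    rw [add_apply] at e
    have e1 : (absRe T * P) u = absRe T u := by
      show absRe T (P u) = absRe T u
      rw [hPu]
    have e2 : (absOp T * P) u = absOp T u := by
      show absOp T (P u) = absOp T u
      rw [hPu]
    rw [e1, e2] at e
    have h1 : re ⟪absOp T u, u⟫ ≤ re ⟪absRe T u, u⟫ := le_inner_le h u
    have h2 : re ⟪absOp T u, u⟫ = re ⟪absRe T u, u⟫ + re ⟪absRe T u, u⟫ := by
      rw [← e, inner_add_left, map_add]
    have h3 : 0 ≤ re ⟪absRe T u, u⟫ := pos_inner hB0 u
    have h4 : re ⟪absOp T u, u⟫ = 0 := by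
      have := pos_inner hQ0 u
      linarith
    have h5 : absOp T u = 0 := pos_apply_eq_zero hQ0 h4
    have h6 : S u = 0 := by
      rw [← hQsq]
      show absOp T (absOp T u) = 0
      rw [h5, map_zero]
    have h7 : re ⟪S u, u⟫ = 0 := by rw [h6, inner_zero_left, map_zero]
    have h8 := inner_adj_mul_re T u
    rw [← norm_eq_zero]
    have h9 : ‖T u‖ ^ 2 = 0 := by rw [← h8]; exact h7
    exact pow_eq_zero_iff two_ne_zero |>.mp h9
  have hT'N0 : ∀ x ∈ Mᗮ, adjoint T x = 0 := by
    intro x hx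
    have h1 : adjoint T x ∈ U := hU_mem' (hNinvT' x hx) (hT'T' x hx)
    have h2 : T (adjoint T x) = 0 := hkill _ h1
    have h3 : ⟪adjoint T x, adjoint T x⟫ = 0 := by
      rw [adjoint_inner_left, h2, inner_zero_right]
    rwa [inner_self_eq_zero] at h3
  have hTN0 : ∀ x ∈ Mᗮ, T x = 0 := by
    intro x hx
    have h1 : S x = adjoint T (T x) := rfl
    have h2 : S x = 0 := by rw [h1, hT'N0 _ (hNinvT x hx)]
    have h3 : re ⟪S x, x⟫ = 0 := by rw [h2, inner_zero_left, map_zero]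
    have h4 := inner_adj_mul_re T x
    rw [← norm_eq_zero]
    have h5 : ‖T x‖ ^ 2 = 0 := by rw [← h4]; exact h3
    exact pow_eq_zero_iff two_ne_zero |>.mp h5
  ext x
  have hm : S (↑(M.orthogonalProjection x) : H) = ↑(M.orthogonalProjection x) :=
    (hMx _).mp (SetLike.coe_mem _)
  have hn : x - ↑(M.orthogonalProjection x) ∈ Mᗮ :=
    Submodule.sub_starProjection_mem_orthogonal (K := M) x
  have hdecomp : x = ↑(M.orthogonalProjection x) + (x - ↑(M.orthogonalProjection x)) := by
    abel
  calc adjoint T x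
      = adjoint T ↑(M.orthogonalProjection x)
        + adjoint T (x - ↑(M.orthogonalProjection x)) := by
        conv_lhs => rw [hdecomp]
        rw [map_add]
  _ = T ↑(M.orthogonalProjection x) + 0 := by
        rw [hMadj _ hm, hT'N0 _ hn]
  _ = T ↑(M.orthogonalProjection x) + T (x - ↑(M.orthogonalProjection x)) := by
        rw [hTN0 _ hn]
  _ = T x := by
        rw [← map_add]
        congr 1
        abel
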